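/- arXiv:1201.1926 — 4 statements merged into one kernel-verified Lean document; each statement's English description precedes it below -/
import Mathlib

section
/- Let f be a transcendental entire function, let R0 > 0 be such that M(r, f) > r for all r ≥ R0, and let ε : [R0, ∞) → (0, 1) be a nonincreasing function such that ε(M^n(r, f)) ≥ ε(r)^{n+1} for all r ≥ R0 and all n ≥ 1. Define η(r) = ε(r) M(r, f) for r ≥ R0. Then there exists R1 ≥ R0 such that η maps [R1, ∞) into itself and, for every R' ≥ R1, A(f) = { z ∈ ℂ : there exists ℓ ∈ ℕ such that |f^{n+ℓ}(z)| ≥ η^n(R') for all n ∈ ℕ }, where η^n denotes the n-th iterate of η. -/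
set_option maxHeartbeats 2000000

/-- The maximum modulus function `M(r, f) = max_{|z| = r} |f z|`. -/
noncomputable def maxMod (f : ℂ → ℂ) (r : ℝ) : ℝ :=
  sSup ((fun z => ‖f z‖) '' Metric.sphere (0 : ℂ) r)

/-- `f` is a transcendental entire function: differentiable on all of `ℂ`
and not (the evaluation of) a polynomial. -/
def EntireTranscendental (f : ℂ → ℂ) : Prop :=
  Differentiable ℂ f ∧ ¬∃ p : Polynomial ℂ, ∀ z, f z = p.eval z

/-- The fast escaping set `A(f)`. -/
def fastEscaping (f : ℂ → ℂ) : Set ℂ :=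
  {z : ℂ | ∃ R : ℝ, 0 < R ∧ (∀ r ≥ R, r < maxMod f r) ∧
    ∃ ℓ : ℕ, ∀ n : ℕ, (maxMod f)^[n] R ≤ ‖f^[n + ℓ] z‖}

noncomputable def tayCoeff (f : ℂ → ℂ) (n : ℕ) : ℂ := (n.factorial : ℂ)⁻¹ * iteratedDeriv n f 0

noncomputable def tayC4 (f : ℂ → ℂ) : ℝ := ∑ n ∈ Finset.range 4, ‖tayCoeff f n‖

section Aux
variable {f : ℂ → ℂ}

lemma maxMod_exists (hd : Differentiable ℂ f) {r : ℝ} (hr : 0 ≤ r) :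
    ∃ z : ℂ, ‖z‖ = r ∧ maxMod f r = ‖f z‖ := by
  have hne : (Metric.sphere (0:ℂ) r).Nonempty := NormedSpace.sphere_nonempty.2 hr
  have hc : IsCompact ((fun z => ‖f z‖) '' Metric.sphere (0 : ℂ) r) :=
    (isCompact_sphere (0:ℂ) r).image (continuous_norm.comp hd.continuous)
  obtain ⟨z, hz, hze⟩ := hc.sSup_mem (hne.image _)
  exact ⟨z, by simpa using mem_sphere_zero_iff_norm.1 hz, hze.symm⟩

lemma le_maxMod (hd : Differentiable ℂ f) {z : ℂ} {r : ℝ} (hz : ‖z‖ = r) :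
    ‖f z‖ ≤ maxMod f r := by
  have hc : IsCompact ((fun z => ‖f z‖) '' Metric.sphere (0 : ℂ) r) :=
    (isCompact_sphere (0:ℂ) r).image (continuous_norm.comp hd.continuous)
  refine le_csSup hc.bddAbove ⟨z, ?_, rfl⟩
  simpa [mem_sphere_zero_iff_norm] using hz

lemma maxMod_nonneg (hd : Differentiable ℂ f) {r : ℝ} (hr : 0 ≤ r) : 0 ≤ maxMod f r := by
  obtain ⟨z, _, hze⟩ := maxMod_exists hd hr
  rw [hze]; positivity

lemma abs_le_maxMod (hd : Differentiable ℂ f) {z : ℂ} {r : ℝ} (hr : 0 < r)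
    (hz : ‖z‖ ≤ r) : ‖f z‖ ≤ maxMod f r := by
  have h := Complex.norm_le_of_forall_mem_frontier_norm_le (U := Metric.ball (0:ℂ) r)
    Metric.isBounded_ball (hd.diffContOnCl) (C := maxMod f r) ?_ (z := z) ?_
  · simpa using h
  · intro w hw
    rw [frontier_ball (0:ℂ) hr.ne'] at hw
    have : ‖w‖ = r := by simpa using mem_sphere_zero_iff_norm.1 hw
    simpa using le_maxMod hd this
  · rw [closure_ball (0:ℂ) hr.ne']
    simpa [Metric.mem_closedBall, Complex.dist_eq] using hz

lemma maxMod_mono (hd : Differentiable ℂ f) {r s : ℝ} (hr : 0 ≤ r) (hrs : r ≤ s) :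
    maxMod f r ≤ maxMod f s := by
  rcases eq_or_lt_of_le (hr.trans hrs) with h | hs
  · have : r = s := le_antisymm hrs (by rw [← h]; exact hr)
    rw [this]
  · obtain ⟨z, hz, hze⟩ := maxMod_exists hd hr
    rw [hze]
    exact abs_le_maxMod hd hs (by rw [hz]; exact hrs)

lemma hasSum_tayCoeff (hd : Differentiable ℂ f) (z : ℂ) :
    HasSum (fun n => tayCoeff f n * z ^ n) (f z) := by
  have h := Complex.hasSum_taylorSeries_of_entire hd 0 z
  convert h using 2 with n
  · rfl
  simp only [tayCoeff, smul_eq_mul, sub_zero]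
  ring

lemma tayCoeff_bound (hd : Differentiable ℂ f) {r : ℝ} (hr : 0 < r) (n : ℕ) :
    ‖tayCoeff f n‖ * r ^ n ≤ maxMod f r := by
  set R : NNReal := ⟨r, hr.le⟩ with hRdef
  have hR0 : 0 < R := by rw [← NNReal.coe_pos]; exact hr
  have hp := hd.hasFPowerSeriesOnBall 0 hR0
  have hkey : tayCoeff f n = (cauchyPowerSeries f 0 R n) (fun _ => (1:ℂ)) := by
    have h1 := hp.factorial_smul (y := (1:ℂ)) n
    rw [tayCoeff, iteratedDeriv_eq_iteratedFDeriv, ← h1, nsmul_eq_mul, ← mul_assoc,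
      inv_mul_cancel₀ (by exact_mod_cast n.factorial_ne_zero), one_mul]
  have hnorm1 : ‖tayCoeff f n‖ ≤ ‖cauchyPowerSeries f 0 R n‖ := by
    rw [hkey]
    calc ‖(cauchyPowerSeries f 0 R n) (fun _ => (1:ℂ))‖
        ≤ ‖cauchyPowerSeries f 0 R n‖ * ∏ _i : Fin n, ‖(1:ℂ)‖ :=
          (cauchyPowerSeries f 0 R n).le_opNorm _
      _ = ‖cauchyPowerSeries f 0 R n‖ := by simp
  have hint : (∫ θ : ℝ in (0)..2 * Real.pi, ‖f (circleMap 0 (R:ℝ) θ)‖)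
      ≤ 2 * Real.pi * maxMod f r := by
    have h2 : (∫ _θ : ℝ in (0)..2 * Real.pi, maxMod f r) = 2 * Real.pi * maxMod f r := by
      simp [intervalIntegral.integral_const]
    rw [← h2]
    refine intervalIntegral.integral_mono_on (by positivity) ?_ intervalIntegrable_const ?_
    · exact ((hd.continuous.comp (continuous_circleMap 0 (R:ℝ))).norm).intervalIntegrable _ _
    · intro θ _
      refine le_maxMod hd ?_
      rw [norm_circleMap_zero]
      exact abs_of_pos hr
  have hnorm2 := norm_cauchyPowerSeries_le f 0 (R:ℝ) n
  have habs : |(R:ℝ)| = r := abs_of_pos hr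
  have hfin : ‖tayCoeff f n‖ ≤ maxMod f r * (r⁻¹) ^ n := by
    refine hnorm1.trans (hnorm2.trans ?_)
    rw [habs]
    have h2pi : (0:ℝ) < 2 * Real.pi := Real.two_pi_pos
    gcongr ?_ * _
    calc (2 * Real.pi)⁻¹ * ∫ θ : ℝ in (0)..2 * Real.pi, ‖f (circleMap 0 (R:ℝ) θ)‖
        ≤ (2 * Real.pi)⁻¹ * (2 * Real.pi * maxMod f r) := by
          gcongr
      _ = maxMod f r := by field_simp
  calc ‖tayCoeff f n‖ * r ^ n ≤ (maxMod f r * (r⁻¹) ^ n) * r ^ n := by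
        gcongr
    _ = maxMod f r := by
        rw [mul_assoc, ← mul_pow, inv_mul_cancel₀ hr.ne', one_pow, mul_one]

lemma summable_tayCoeff (hd : Differentiable ℂ f) {u : ℝ} (hu : 0 < u) :
    Summable (fun n => ‖tayCoeff f n‖ * u ^ n) := by
  refine Summable.of_nonneg_of_le (fun n => by positivity) (fun n => ?_)
    (((summable_geometric_of_lt_one (by norm_num) (by norm_num : (1/2:ℝ) < 1))).mul_left
      (maxMod f (2*u)))
  have h := tayCoeff_bound hd (by positivity : (0:ℝ) < 2*u) n
  calc ‖tayCoeff f n‖ * u ^ n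
      = (‖tayCoeff f n‖ * (2*u) ^ n) * (1/2 : ℝ) ^ n := by
        rw [mul_assoc, ← mul_pow]; ring_nf
    _ ≤ maxMod f (2*u) * (1/2:ℝ) ^ n := by gcongr

lemma maxMod_le_tsum (hd : Differentiable ℂ f) {u : ℝ} (hu : 0 < u) :
    maxMod f u ≤ ∑' n, ‖tayCoeff f n‖ * u ^ n := by
  obtain ⟨z, hz, hze⟩ := maxMod_exists hd hu.le
  rw [hze]
  have h1 := hasSum_tayCoeff hd z
  have hs : Summable (fun n => ‖tayCoeff f n * z ^ n‖) := by
    have := summable_tayCoeff hd hu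
    refine this.congr fun n => ?_
    simp [norm_mul, norm_pow, hz]
  calc ‖f z‖ = ‖∑' n, tayCoeff f n * z ^ n‖ := by
        rw [h1.tsum_eq]
    _ ≤ ∑' n, ‖tayCoeff f n * z ^ n‖ := norm_tsum_le_tsum_norm hs
    _ = ∑' n, ‖tayCoeff f n‖ * u ^ n := by
        refine tsum_congr fun n => ?_
        simp [norm_mul, norm_pow, hz]

lemma maxMod_doubling (hd : Differentiable ℂ f) {u B : ℝ} (hu : 1 ≤ u) (hB : 2 ≤ B)
    (hCu : 2 * tayC4 f * u ^ 3 ≤ maxMod f u) :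
    B ^ 4 * maxMod f u ≤ 4 * maxMod f (B * u) := by
  have hu0 : (0:ℝ) < u := by linarith
  have hB0 : (0:ℝ) < B := by linarith
  have hBu : (0:ℝ) < B * u := by positivity
  have hsum := summable_tayCoeff hd hu0
  have hsplit := Summable.sum_add_tsum_nat_add (f := fun n => ‖tayCoeff f n‖ * u ^ n) 4 hsum
  have hhead : ∑ n ∈ Finset.range 4, ‖tayCoeff f n‖ * u ^ n ≤ tayC4 f * u ^ 3 := by
    rw [tayC4, Finset.sum_mul]
    refine Finset.sum_le_sum fun n hn => ?_
    have hn3 : n ≤ 3 := by simpa using Nat.lt_succ_iff.mp (Finset.mem_range.mp hn)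
    exact mul_le_mul_of_nonneg_left (pow_le_pow_right₀ hu hn3) (norm_nonneg _)
  have htail : (∑' n, ‖tayCoeff f (n+4)‖ * u ^ (n+4))
      ≤ 2 * maxMod f (B * u) / B ^ 4 := by
    have hM0 : 0 ≤ maxMod f (B*u) := maxMod_nonneg hd hBu.le
    have hterm : ∀ n : ℕ, ‖tayCoeff f (n+4)‖ * u ^ (n+4)
        ≤ (maxMod f (B*u) * (1/B)^4) * (1/B) ^ n := by
      intro n
      have h := tayCoeff_bound hd hBu (n+4)
      calc ‖tayCoeff f (n+4)‖ * u ^ (n+4)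
          = (‖tayCoeff f (n+4)‖ * (B*u) ^ (n+4)) * (1/B) ^ (n+4) := by
            rw [mul_assoc, ← mul_pow]
            congr 2
            field_simp
        _ ≤ maxMod f (B*u) * (1/B) ^ (n+4) := by gcongr
        _ = (maxMod f (B*u) * (1/B)^4) * (1/B) ^ n := by rw [pow_add]; ring
    have hgeo : Summable (fun n : ℕ => (maxMod f (B*u) * (1/B)^4) * (1/B) ^ n) :=
      (summable_geometric_of_lt_one (by positivity) (by rw [div_lt_one hB0]; linarith)).mul_left _
    have h1 : (∑' n, ‖tayCoeff f (n+4)‖ * u ^ (n+4))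
        ≤ ∑' n : ℕ, (maxMod f (B*u) * (1/B)^4) * (1/B) ^ n := by
      refine Summable.tsum_le_tsum hterm ?_ hgeo
      exact (summable_nat_add_iff 4).mpr hsum
    refine h1.trans ?_
    rw [tsum_mul_left, tsum_geometric_of_lt_one (by positivity) (by rw [div_lt_one hB0]; linarith)]
    have h12 : (1:ℝ)/B ≤ 1/2 := by
      rw [div_le_div_iff₀ hB0 (by norm_num : (0:ℝ) < 2)]; linarith
    have hle2 : (1 - 1/B)⁻¹ ≤ 2 := by
      rw [inv_le_comm₀ (by linarith) (by norm_num)]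
      linarith
    calc maxMod f (B*u) * (1/B)^4 * (1 - 1/B)⁻¹ ≤ maxMod f (B*u) * (1/B)^4 * 2 := by gcongr
      _ = 2 * maxMod f (B*u) / B^4 := by field_simp
  have hMle : maxMod f u ≤ tayC4 f * u^3 + 2 * maxMod f (B*u) / B^4 := by
    have := maxMod_le_tsum hd hu0
    rw [← hsplit] at this
    exact this.trans (add_le_add hhead htail)
  have hB4 : (0:ℝ) < B ^ 4 := by positivity
  have h2 : maxMod f u / 2 ≤ 2 * maxMod f (B*u) / B^4 := by linarith
  rw [div_le_div_iff₀ (by norm_num) hB4] at h2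
  linarith

lemma exists_tayCoeff_ne (hd : Differentiable ℂ f)
    (htr : ¬∃ p : Polynomial ℂ, ∀ z, f z = p.eval z) (k : ℕ) :
    ∃ m, k ≤ m ∧ tayCoeff f m ≠ 0 := by
  by_contra h
  push_neg at h
  refine htr ⟨∑ n ∈ Finset.range k, Polynomial.C (tayCoeff f n) * Polynomial.X ^ n, fun z => ?_⟩
  have h1 := hasSum_tayCoeff hd z
  have h2 : HasSum (fun n => tayCoeff f n * z ^ n)
      (∑ n ∈ Finset.range k, tayCoeff f n * z ^ n) := by
    refine hasSum_sum_of_ne_finset_zero fun m hm => ?_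
    have : k ≤ m := by simpa using hm
    simp [h m this]
  rw [h1.unique h2]
  simp [Polynomial.eval_finset_sum]

lemma maxMod_growth (hd : Differentiable ℂ f)
    (htr : ¬∃ p : Polynomial ℂ, ∀ z, f z = p.eval z) (k : ℕ) (c : ℝ) :
    ∃ ρ : ℝ, 1 ≤ ρ ∧ ∀ r, ρ ≤ r → c * r ^ k ≤ maxMod f r := by
  obtain ⟨m, hm, hne⟩ := exists_tayCoeff_ne hd htr (k+1)
  set A := ‖tayCoeff f m‖ with hA
  have hA0 : 0 < A := norm_pos_iff.2 hne
  refine ⟨max 1 (c / A), le_max_left _ _, fun r hr => ?_⟩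
  have hr1 : (1:ℝ) ≤ r := le_trans (le_max_left _ _) hr
  have hr0 : (0:ℝ) < r := by linarith
  have hrc : c / A ≤ r := le_trans (le_max_right _ _) hr
  have hcA : c ≤ A * r := by
    rw [div_le_iff₀ hA0] at hrc; linarith [mul_comm r A]
  have h1 : c * r ^ k ≤ A * r ^ m := by
    calc c * r ^ k ≤ (A * r) * r ^ k := by
          apply mul_le_mul_of_nonneg_right hcA (by positivity)
      _ = A * r ^ (k+1) := by ring
      _ ≤ A * r ^ m := by
          gcongr
  exact h1.trans (tayCoeff_bound hd hr0 m)

lemma orbit_ge (hd : Differentiable ℂ f) {R : ℝ} (hR : 0 < R)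
    (hMR : ∀ r, R ≤ r → r < maxMod f r) : ∀ n, R ≤ (maxMod f)^[n] R := by
  intro n
  induction n with
  | zero => simp
  | succ n ih =>
    rw [Function.iterate_succ_apply']
    exact le_trans ih (hMR _ ih).le

lemma orbit_lt_succ (hd : Differentiable ℂ f) {R : ℝ} (hR : 0 < R)
    (hMR : ∀ r, R ≤ r → r < maxMod f r) :
    ∀ n, (maxMod f)^[n] R < (maxMod f)^[n+1] R := by
  intro n
  rw [Function.iterate_succ_apply']
  exact hMR _ (orbit_ge hd hR hMR n)

lemma orbit_unbounded (hd : Differentiable ℂ f) {R : ℝ} (hR : 0 < R)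
    (hMR : ∀ r, R ≤ r → r < maxMod f r) (B : ℝ) :
    ∃ n, B ≤ (maxMod f)^[n] R := by
  by_contra h
  push_neg at h
  set g : ℕ → ℝ := fun n => (maxMod f)^[n] R with hg
  have hmono : Monotone g := monotone_nat_of_le_succ fun n => (orbit_lt_succ hd hR hMR n).le
  have hbdd : BddAbove (Set.range g) := ⟨B, by rintro x ⟨n, rfl⟩; exact (h n).le⟩
  set L := ⨆ n, g n with hL
  have hgL : ∀ n, g n ≤ L := fun n => le_ciSup hbdd n
  have hRL : R ≤ L := by simpa [hg] using hgL 0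
  have hL0 : (0:ℝ) < L := lt_of_lt_of_le hR hRL
  obtain ⟨z, hz, hze⟩ := maxMod_exists hd hL0.le
  have hML : L < ‖f z‖ := by rw [← hze]; exact hMR L hRL
  have htend : Filter.Tendsto g Filter.atTop (nhds L) := tendsto_atTop_ciSup hmono hbdd
  have habs : ∀ n, ‖((g n / L : ℝ) : ℂ) * z‖ = g n := by
    intro n
    have hgn : 0 ≤ g n := le_trans hR.le (orbit_ge hd hR hMR n)
    rw [norm_mul, Complex.norm_real, Real.norm_eq_abs, hz, abs_of_nonneg (by positivity)]
    field_simp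
  have h1 : ∀ n, ‖f (((g n / L : ℝ) : ℂ) * z)‖ ≤ L := by
    intro n
    refine le_trans (le_maxMod hd (habs n)) ?_
    have : maxMod f (g n) = g (n+1) := by
      rw [hg]; simp [Function.iterate_succ_apply']
    rw [this]; exact hgL (n+1)
  have h2 : Filter.Tendsto (fun n => ‖f (((g n / L : ℝ) : ℂ) * z)‖)
      Filter.atTop (nhds (‖f z‖)) := by
    have ht1 : Filter.Tendsto (fun n => ((g n / L : ℝ) : ℂ) * z) Filter.atTop
        (nhds (((L / L : ℝ) : ℂ) * z)) :=
      ((Complex.continuous_ofReal.tendsto _).comp (htend.div_const L)).mul_const z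
    rw [div_self hL0.ne'] at ht1
    simp only [Complex.ofReal_one, one_mul] at ht1
    exact ((continuous_norm.comp hd.continuous).tendsto z).comp ht1
  have := le_of_tendsto h2 (Filter.Eventually.of_forall h1)
  linarith

lemma orbit_nonneg (hd : Differentiable ℂ f) {r : ℝ} (hr : 0 ≤ r) :
    ∀ n, 0 ≤ (maxMod f)^[n] r := by
  intro n
  induction n with
  | zero => simpa
  | succ n ih =>
    rw [Function.iterate_succ_apply']
    exact maxMod_nonneg hd ih

lemma iterate_maxMod_mono (hd : Differentiable ℂ f) {r s : ℝ} (hr : 0 ≤ r) (hrs : r ≤ s) :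
    ∀ n, (maxMod f)^[n] r ≤ (maxMod f)^[n] s := by
  intro n
  induction n with
  | zero => simpa
  | succ n ih =>
    rw [Function.iterate_succ_apply', Function.iterate_succ_apply']
    exact maxMod_mono hd (orbit_nonneg hd hr n) ih

end Aux
theorem simply_connected_fast_escaping_stmt0
    (f : ℂ → ℂ) (hf : EntireTranscendental f)
    (R0 : ℝ) (hR0 : 0 < R0) (hM : ∀ r ≥ R0, r < maxMod f r)
    (ε : ℝ → ℝ)
    (hε01 : ∀ r ≥ R0, ε r ∈ Set.Ioo (0 : ℝ) 1)
    (hεmono : ∀ r s, R0 ≤ r → r ≤ s → ε s ≤ ε r)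
    (hεM : ∀ r ≥ R0, ∀ n : ℕ, 1 ≤ n → ε r ^ (n + 1) ≤ ε ((maxMod f)^[n] r)) :
    ∃ R1 : ℝ, R0 ≤ R1 ∧ (∀ r ≥ R1, R1 ≤ ε r * maxMod f r) ∧
      ∀ R' ≥ R1,
        fastEscaping f =
          {z : ℂ | ∃ ℓ : ℕ, ∀ n : ℕ,
            (fun r => ε r * maxMod f r)^[n] R' ≤ ‖f^[n + ℓ] z‖} := by
  obtain ⟨hd, htr⟩ := hf
  obtain ⟨ρ₁, hρ₁1, hρ₁⟩ := maxMod_growth hd htr 3 (2 * tayC4 f)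
  obtain ⟨ρ₂, hρ₂1, hρ₂⟩ := maxMod_growth hd htr 3 1
  -- ε lower bound  : ∃ Rε ≥ R0, ∀ r ≥ Rε, 1/r ≤ ε r
  have hεlow : ∃ Rε : ℝ, R0 ≤ Rε ∧ ∀ r, Rε ≤ r → 1 / r ≤ ε r := by
    have hε0 := (hε01 R0 le_rfl).1
    have hε1 := (hε01 R0 le_rfl).2
    set q : ℝ := (ε R0)⁻¹ with hq
    have hq1 : 1 < q := (one_lt_inv₀ hε0).2 hε1
    set m : ℕ → ℝ := fun n => (maxMod f)^[n] R0 with hmdef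
    have hMR0 : ∀ r, R0 ≤ r → r < maxMod f r := fun r hr => hM r hr
    have hm_mono : Monotone m :=
      monotone_nat_of_le_succ fun n => (orbit_lt_succ hd hR0 hMR0 n).le
    have hm_ge : ∀ n, R0 ≤ m n := orbit_ge hd hR0 hMR0
    obtain ⟨n₀, hn₀⟩ := orbit_unbounded hd hR0 hMR0 (max ρ₂ q)
    have hmn₀ρ : ρ₂ ≤ m n₀ := le_trans (le_max_left _ _) hn₀
    have hmn₀q : q ≤ m n₀ := le_trans (le_max_right _ _) hn₀
    -- growth along orbit: ∀ j, q^(2j) * m n₀ ≤ m (n₀ + j)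
    have hgrow : ∀ j : ℕ, q ^ (2*j) * m n₀ ≤ m (n₀ + j) := by
      intro j
      induction j with
      | zero => simp
      | succ j ih =>
        have hmj : m n₀ ≤ m (n₀ + j) := hm_mono (by omega)
        have hq_le : q ≤ m (n₀ + j) := le_trans hmn₀q hmj
        have hρ_le : ρ₂ ≤ m (n₀ + j) := le_trans hmn₀ρ hmj
        have h1le : (1:ℝ) ≤ m (n₀ + j) := le_trans (le_trans hρ₂1 hmn₀ρ) hmj
        have hcube : m (n₀ + j) ^ 3 ≤ m (n₀ + j + 1) := by
          have := hρ₂ (m (n₀ + j)) hρ_le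
          rw [one_mul] at this
          have heq : m (n₀ + j + 1) = maxMod f (m (n₀ + j)) := by
            rw [hmdef]; simp [Function.iterate_succ_apply']
          rw [heq]; exact this
        have hq0 : (0:ℝ) < q := by linarith
        have hsq : q ^ 2 ≤ m (n₀ + j) ^ 2 := by nlinarith
        have hstep : q ^ 2 * m (n₀ + j) ≤ m (n₀ + j) ^ 3 := by
          calc q ^ 2 * m (n₀ + j) ≤ m (n₀ + j) ^ 2 * m (n₀ + j) :=
                mul_le_mul_of_nonneg_right hsq (by linarith)
            _ = m (n₀ + j) ^ 3 := by ring
        calc q ^ (2*(j+1)) * m n₀ = q ^ 2 * (q ^ (2*j) * m n₀) := by ring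
          _ ≤ q ^ 2 * m (n₀ + j) := by
              have : (0:ℝ) ≤ q ^ 2 := by positivity
              exact mul_le_mul_of_nonneg_left ih this
          _ ≤ m (n₀ + j) ^ 3 := hstep
          _ ≤ m (n₀ + (j+1)) := by rw [← Nat.add_assoc]; exact hcube
    -- ∀ n ≥ 2n₀+2, q^(n+2) ≤ m n
    have hqm : ∀ n : ℕ, 2*n₀ + 2 ≤ n → q ^ (n+2) ≤ m n := by
      intro n hn
      have hj : n₀ ≤ n := by omega
      set j := n - n₀ with hjdef
      have hnj : n = n₀ + j := by omega
      have hjge : n₀ + 2 ≤ j := by omega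
      have h1 := hgrow j
      have h2 : q ^ (n+2) ≤ q ^ (2*j) * m n₀ := by
        calc q ^ (n+2) ≤ q ^ (2*j + 1) := by
              apply pow_le_pow_right₀ hq1.le
              omega
          _ = q ^ (2*j) * q := by ring
          _ ≤ q ^ (2*j) * m n₀ := by
              have : (0:ℝ) ≤ q ^ (2*j) := by positivity
              exact mul_le_mul_of_nonneg_left hmn₀q this
      have h1' : q ^ (2*j) * m n₀ ≤ m n := by rw [hnj]; exact h1
      exact le_trans h2 h1'
    refine ⟨m (2*n₀ + 2), hm_ge _, fun r hr => ?_⟩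
    have hrR0 : R0 ≤ r := le_trans (hm_ge _) hr
    have hex : ∃ jj : ℕ, r < m jj := by
      obtain ⟨jj, hjj⟩ := orbit_unbounded hd hR0 hMR0 (r + 1)
      exact ⟨jj, by dsimp [m]; linarith⟩
    set j₀ := Nat.find hex with hj₀def
    have hj₀ : r < m j₀ := Nat.find_spec hex
    have hj₀N : 2*n₀ + 2 < j₀ := by
      by_contra hc
      push_neg at hc
      have : m j₀ ≤ m (2*n₀+2) := hm_mono hc
      linarith
    set n := j₀ - 1 with hndef
    have hnN : 2*n₀ + 2 ≤ n := by omega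
    have hmn_le : m n ≤ r := by
      by_contra hc
      push_neg at hc
      exact absurd (Nat.find_min' hex hc) (by omega)
    have hn1 : n + 1 = j₀ := by omega
    have hεmn : ε (m (n+1)) ≤ ε r := hεmono r (m (n+1)) hrR0 (by rw [hn1]; exact hj₀.le)
    have hεpow : ε R0 ^ (n+2) ≤ ε (m (n+1)) := by
      have := hεM R0 le_rfl (n+1) (by omega)
      simpa [hmdef] using this
    have hqn : q ^ (n+2) ≤ m n := hqm n hnN
    have hr0 : (0:ℝ) < r := by linarith
    have hmn0 : (0:ℝ) < m n := lt_of_lt_of_le hR0 (hm_ge n)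
    have hq2 : (0:ℝ) < q ^ (n+2) := by positivity
    have h5 : 1 / r ≤ (q ^ (n+2))⁻¹ := by
      rw [one_div]
      apply inv_anti₀ hq2
      linarith
    have h6 : (q ^ (n+2))⁻¹ = ε R0 ^ (n+2) := by
      rw [hq, ← inv_pow, inv_inv]
    linarith [h5, h6 ▸ h5, hεpow, hεmn]
  obtain ⟨Rε, hRεR0, hRε⟩ := hεlow
  set R1 : ℝ := max (max ρ₁ ρ₂) (max Rε (max R0 2)) with hR1def
  have hR1R0 : R0 ≤ R1 :=
    le_trans (le_trans (le_max_left _ _) (le_max_right _ _)) (le_max_right _ _)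
  have hR1_2 : (2:ℝ) ≤ R1 :=
    le_trans (le_trans (le_max_right _ _) (le_max_right _ _)) (le_max_right _ _)
  have hR1pos : (0:ℝ) < R1 := by linarith
  have hPa : ∀ r, R1 ≤ r → 1 / r ≤ ε r := fun r hr =>
    hRε r (le_trans (le_trans (le_max_left _ _) (le_max_right _ _)) hr)
  have hPb : ∀ r, R1 ≤ r → 2 * tayC4 f * r ^ 3 ≤ maxMod f r := fun r hr =>
    hρ₁ r (le_trans (le_trans (le_max_left _ _) (le_max_left _ _)) hr)
  have hPc : ∀ r, R1 ≤ r → r ^ 3 ≤ maxMod f r := fun r hr => by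
    have := hρ₂ r (le_trans (le_trans (le_max_right _ _) (le_max_left _ _)) hr)
    linarith
  have hPd : ∀ r, R1 ≤ r → r < maxMod f r := fun r hr => hM r (le_trans hR1R0 hr)
  have hPe : ∀ r, R1 ≤ r → 0 < ε r ∧ ε r < 1 := fun r hr => hε01 r (le_trans hR1R0 hr)
  have hsq : ∀ r, R1 ≤ r → r ^ 2 ≤ ε r * maxMod f r := by
    intro r hr
    have hr0 : (0:ℝ) < r := lt_of_lt_of_le hR1pos hr
    have h1 := hPa r hr
    have h2 := hPc r hr
    have h3 := (hPe r hr).1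
    have h4 : (1/r) * r ^ 3 ≤ ε r * maxMod f r :=
      mul_le_mul h1 h2 (by positivity) h3.le
    have h5 : (1/r) * r ^ 3 = r ^ 2 := by field_simp
    linarith
  have hprop1 : ∀ r ≥ R1, R1 ≤ ε r * maxMod f r := by
    intro r hr
    have := hsq r hr
    nlinarith
  refine ⟨R1, hR1R0, hprop1, ?_⟩
  intro R' hR'
  have hR0R' : R0 ≤ R' := le_trans hR1R0 hR'
  set η : ℝ → ℝ := fun r => ε r * maxMod f r with hηdef
  set t : ℕ → ℝ := fun n => η^[n] R' with htdef
  have ht0 : t 0 = R' := rfl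
  have htsucc : ∀ n, t (n+1) = ε (t n) * maxMod f (t n) := by
    intro n
    rw [htdef]
    simp only [Function.iterate_succ_apply']
    rfl
  have ht_ge : ∀ n, R1 ≤ t n := by
    intro n
    induction n with
    | zero => exact hR'
    | succ n ih =>
      have h1 := hsq (t n) ih
      rw [htsucc n] at *
      nlinarith
  have ht_sq : ∀ n, (t n) ^ 2 ≤ t (n+1) := by
    intro n
    rw [htsucc n]
    exact hsq (t n) (ht_ge n)
  have ht_pos : ∀ n, (0:ℝ) < t n := fun n => lt_of_lt_of_le hR1pos (ht_ge n)
  have ht_leM : ∀ n, t n ≤ (maxMod f)^[n] R' := by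
    intro n
    induction n with
    | zero => exact le_rfl
    | succ n ih =>
      rw [htsucc n, Function.iterate_succ_apply']
      have hε1 := (hPe (t n) (ht_ge n)).2
      have hM0 : 0 ≤ maxMod f (t n) := maxMod_nonneg hd (ht_pos n).le
      calc ε (t n) * maxMod f (t n) ≤ maxMod f (t n) :=
            mul_le_of_le_one_left hM0 hε1.le
        _ ≤ maxMod f ((maxMod f)^[n] R') := maxMod_mono hd (ht_pos n).le ih
  have ht_pow : ∀ (j mm : ℕ), t j ^ (2 ^ mm) ≤ t (j + mm) := by
    intro j mm
    induction mm with
    | zero => simp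
    | succ mm ih =>
      have h1 : (t j ^ (2 ^ mm)) ^ 2 ≤ (t (j + mm)) ^ 2 :=
        pow_le_pow_left₀ (pow_nonneg (ht_pos j).le _) ih 2
      have h2 := ht_sq (j + mm)
      calc t j ^ (2 ^ (mm+1)) = (t j ^ (2 ^ mm)) ^ 2 := by
            rw [← pow_mul, pow_succ]
        _ ≤ (t (j + mm)) ^ 2 := h1
        _ ≤ t (j + mm + 1) := h2
        _ = t (j + (mm + 1)) := by ring_nf
  have ht_unbdd : ∀ B : ℝ, ∃ j, B ≤ t j := by
    intro B
    have hgrow2 : ∀ n, 2 * t n ≤ t (n+1) := by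
      intro n
      have h1 := ht_sq n
      have h2 := ht_ge n
      nlinarith
    have hpow : ∀ n : ℕ, (2:ℝ) ^ n * R' ≤ t n := by
      intro n
      induction n with
      | zero => simp [ht0]
      | succ n ih =>
        calc (2:ℝ) ^ (n+1) * R' = 2 * ((2:ℝ)^n * R') := by ring
          _ ≤ 2 * t n := by linarith
          _ ≤ t (n+1) := hgrow2 n
    have hR'pos : (0:ℝ) < R' := lt_of_lt_of_le hR1pos hR'
    obtain ⟨j, hj⟩ := pow_unbounded_of_one_lt (B / R') (by norm_num : (1:ℝ) < 2)
    refine ⟨j, ?_⟩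
    have : B / R' ≤ (2:ℝ)^j := hj.le
    rw [div_le_iff₀ hR'pos] at this
    calc B ≤ (2:ℝ)^j * R' := this
      _ ≤ t j := hpow j
  -- the set equality
  ext z
  simp only [fastEscaping, Set.mem_setOf_eq]
  constructor
  · rintro ⟨Rz, hRz0, hRzM, ℓ, hℓ⟩
    have hRzM' : ∀ r, Rz ≤ r → r < maxMod f r := fun r hr => hRzM r hr
    obtain ⟨mm, hmm⟩ := orbit_unbounded hd hRz0 hRzM' R'
    refine ⟨ℓ + mm, fun n => ?_⟩
    have h1 : t n ≤ (maxMod f)^[n] R' := ht_leM n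
    have h2 : (maxMod f)^[n] R' ≤ (maxMod f)^[n] ((maxMod f)^[mm] Rz) :=
      iterate_maxMod_mono hd (lt_of_lt_of_le hR1pos hR').le hmm n
    have h3 : (maxMod f)^[n] ((maxMod f)^[mm] Rz) = (maxMod f)^[n + mm] Rz :=
      (Function.iterate_add_apply _ n mm Rz).symm
    have h4 := hℓ (n + mm)
    have hidx : n + mm + ℓ = n + (ℓ + mm) := by omega
    rw [hidx] at h4
    calc t n ≤ (maxMod f)^[n] R' := h1
      _ ≤ (maxMod f)^[n] ((maxMod f)^[mm] Rz) := h2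
      _ = (maxMod f)^[n + mm] Rz := h3
      _ ≤ ‖f^[n + (ℓ + mm)] z‖ := h4
  · rintro ⟨ℓ, hz⟩
    have hεR' := hε01 R' hR0R'
    set d₀ : ℝ := Real.log (ε R')⁻¹ with hd₀def
    have hd₀pos : 0 < d₀ := Real.log_pos ((one_lt_inv₀ hεR'.1).2 hεR'.2)
    have hεexp : ε R' = Real.exp (-d₀) := by
      rw [hd₀def, Real.exp_neg, Real.exp_log (inv_pos.2 hεR'.1), inv_inv]
    set G : ℝ := max R1 (Real.exp (d₀ + 5)) with hGdef
    have hG1 : (1:ℝ) ≤ G := le_trans (by linarith) (le_max_left _ _)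
    have hGR1 : R1 ≤ G := le_max_left _ _
    have hGexp : Real.exp (d₀ + 5) ≤ G := le_max_right _ _
    obtain ⟨j₁, hj₁⟩ := ht_unbdd G
    set k := j₁ + (j₁ + 2) with hkdef
    have hk2 : 2 ≤ k := by omega
    have htk : G ^ (k+2) ≤ t k := by
      have h1 : t j₁ ^ (2 ^ (j₁+2)) ≤ t (j₁ + (j₁ + 2)) := by
        have h2exp : (2:ℕ) ^ (j₁ + 2) = 2 ^ (j₁ + 2) := rfl
        exact ht_pow j₁ (j₁ + 2)
      have h2 : G ^ (2 ^ (j₁+2)) ≤ t j₁ ^ (2 ^ (j₁+2)) :=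
        pow_le_pow_left₀ (by linarith) hj₁ _
      have hexp_le : k + 2 ≤ 2 ^ (j₁ + 2) := by
        have := Nat.lt_two_pow_self (n := j₁)
        have h4 : (2:ℕ) ^ (j₁ + 2) = 2 ^ j₁ * 4 := by rw [pow_add]; norm_num
        omega
      have h3 : G ^ (k+2) ≤ G ^ (2 ^ (j₁+2)) := pow_le_pow_right₀ hG1 hexp_le
      exact le_trans h3 (le_trans h2 h1)
    set b : ℕ → ℝ := fun n => Real.exp (d₀ * (n + k + 1) + 5) with hbdef
    have hb_pos : ∀ n, (0:ℝ) < b n := fun n => Real.exp_pos _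
    have hb_one : ∀ n, (1:ℝ) ≤ b n := by
      intro n
      simp only [hbdef]
      have h0 : (0:ℝ) ≤ (n:ℝ) + k + 1 := by positivity
      have h1 := mul_nonneg hd₀pos.le h0
      have h2 := Real.exp_le_exp.2 (show (0:ℝ) ≤ d₀ * ((n:ℝ) + k + 1) + 5 by linarith)
      rwa [Real.exp_zero] at h2
    have hb_two : ∀ n, (2:ℝ) ≤ b n := by
      intro n
      have h5 : Real.exp 5 ≤ b n := by
        simp only [hbdef]
        apply Real.exp_le_exp.2
        have h0 : (0:ℝ) ≤ (n:ℝ) + k + 1 := by positivity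
        have := mul_nonneg hd₀pos.le h0
        linarith
      have := Real.add_one_le_exp (5:ℝ)
      linarith
    have hMR1 : ∀ r, R1 ≤ r → r < maxMod f r := hPd
    have horb_ge : ∀ n, R1 ≤ (maxMod f)^[n] R1 := orbit_ge hd hR1pos hMR1
    have hmain : ∀ n, b n * (maxMod f)^[n] R1 ≤ t (n + k) := by
      intro n
      induction n with
      | zero =>
        simp only [Function.iterate_zero_apply, Nat.zero_add]
        have hb0 : b 0 ≤ Real.exp ((d₀ + 5) * (k+1)) := by
          simp only [hbdef]
          apply Real.exp_le_exp.2
          push_cast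
          nlinarith [hd₀pos.le, (Nat.cast_nonneg (α := ℝ) k)]
        have hexpk : Real.exp ((d₀ + 5) * (k+1)) = Real.exp (d₀ + 5) ^ (k+1) := by
          rw [← Real.exp_nat_mul]
          congr 1
          push_cast
          ring
        calc b 0 * R1 ≤ Real.exp (d₀ + 5) ^ (k+1) * G := by
              refine mul_le_mul ?_ hGR1 hR1pos.le (pow_nonneg (Real.exp_pos _).le _)
              rw [← hexpk]; exact hb0
          _ ≤ G ^ (k+1) * G := by
              apply mul_le_mul_of_nonneg_right _ (by linarith)
              exact pow_le_pow_left₀ (Real.exp_pos _).le hGexp _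
          _ = G ^ (k+2) := by rw [← pow_succ]
          _ ≤ t k := htk
      | succ n ih =>
        set u : ℝ := (maxMod f)^[n] R1 with hudef
        have hu_ge : R1 ≤ u := horb_ge n
        have hu1 : (1:ℝ) ≤ u := by linarith
        have hu0 : (0:ℝ) < u := by linarith
        have hu2C := hPb u hu_ge
        have hkey := maxMod_doubling hd hu1 (hb_two n) hu2C
        have hMu_pos : (0:ℝ) < maxMod f u := by
          have := hPc u hu_ge
          have h13 : (1:ℝ) ^ 3 ≤ u ^ 3 := pow_le_pow_left₀ (by norm_num) hu1 3
          nlinarith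
        have hbu_le : b n * u ≤ t (n + k) := ih
        have hmono2 : maxMod f (b n * u) ≤ maxMod f (t (n+k)) :=
          maxMod_mono hd (by positivity) hbu_le
        have hεt : Real.exp (-(d₀ * ((n:ℝ)+k+1))) ≤ ε (t (n+k)) := by
          have h1 : t (n+k) ≤ (maxMod f)^[n+k] R' := ht_leM (n+k)
          have h2 : ε ((maxMod f)^[n+k] R') ≤ ε (t (n+k)) :=
            hεmono _ _ (le_trans hR1R0 (ht_ge (n+k))) h1
          have h3 : ε R' ^ (n+k+1) ≤ ε ((maxMod f)^[n+k] R') :=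
            hεM R' hR0R' (n+k) (by omega)
          have h4 : ε R' ^ (n+k+1) = Real.exp (-(d₀*((n:ℝ)+k+1))) := by
            rw [hεexp, ← Real.exp_nat_mul]
            congr 1
            push_cast
            ring
          rw [← h4]
          exact le_trans h3 h2
        have hstep : t (n+k+1) = ε (t (n+k)) * maxMod f (t (n+k)) := htsucc (n+k)
        have hMt0 : 0 ≤ maxMod f (t (n+k)) := maxMod_nonneg hd (ht_pos (n+k)).le
        -- numeric inequality
        have hnum : b (n+1) * 4 ≤ Real.exp (-(d₀ * ((n:ℝ)+k+1))) * b n ^ 4 := by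
          have hbn4 : b n ^ 4 = Real.exp (4 * (d₀ * ((n:ℝ)+k+1) + 5)) := by
            rw [hbdef, ← Real.exp_nat_mul]
            norm_num
          have hb1' : b (n+1) = Real.exp (d₀ * ((n:ℝ)+1+k+1) + 5) := by
            simp only [hbdef]
            push_cast
            ring_nf
          rw [hbn4, hb1', ← Real.exp_add]
          have h15 : (4:ℝ) ≤ Real.exp 15 := by
            have := Real.add_one_le_exp (15:ℝ)
            linarith
          have hN1 : (1:ℝ) ≤ (n:ℝ) + k + 1 := by
            have h1 := Nat.cast_nonneg (α := ℝ) n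
            have h2 := Nat.cast_nonneg (α := ℝ) k
            linarith
          calc Real.exp (d₀ * ((n:ℝ)+1+k+1) + 5) * 4
              ≤ Real.exp (d₀ * ((n:ℝ)+1+k+1) + 5) * Real.exp 15 := by
                apply mul_le_mul_of_nonneg_left h15 (Real.exp_pos _).le
            _ = Real.exp (d₀ * ((n:ℝ)+1+k+1) + 20) := by
                rw [← Real.exp_add]; ring_nf
            _ ≤ Real.exp (-(d₀ * ((n:ℝ)+k+1)) + (4 * (d₀ * ((n:ℝ)+k+1) + 5))) := by
                apply Real.exp_le_exp.2
                nlinarith [hd₀pos.le]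
        have hchain : b (n+1) * maxMod f u ≤ t (n+k+1) := by
          have c1 : b (n+1) * maxMod f u ≤
              (Real.exp (-(d₀ * ((n:ℝ)+k+1))) * b n ^ 4 / 4) * maxMod f u := by
            apply mul_le_mul_of_nonneg_right _ hMu_pos.le
            linarith
          have c2 : (Real.exp (-(d₀ * ((n:ℝ)+k+1))) * b n ^ 4 / 4) * maxMod f u
              ≤ Real.exp (-(d₀ * ((n:ℝ)+k+1))) * maxMod f (b n * u) := by
            have := hkey
            have hex0 : (0:ℝ) < Real.exp (-(d₀ * ((n:ℝ)+k+1))) := Real.exp_pos _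
            nlinarith
          have c3 : Real.exp (-(d₀ * ((n:ℝ)+k+1))) * maxMod f (b n * u)
              ≤ ε (t (n+k)) * maxMod f (t (n+k)) := by
            have hM0' : 0 ≤ maxMod f (b n * u) := maxMod_nonneg hd (by positivity)
            apply mul_le_mul hεt hmono2 hM0' (hε01 _ (le_trans hR1R0 (ht_ge (n+k)))).1.le
          rw [hstep]
          exact le_trans c1 (le_trans c2 c3)
        have hfin : (maxMod f)^[n+1] R1 = maxMod f u := Function.iterate_succ_apply' _ _ _
        calc b (n+1) * (maxMod f)^[n+1] R1 = b (n+1) * maxMod f u := by rw [hfin]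
          _ ≤ t (n+k+1) := hchain
          _ = t ((n+1) + k) := by ring_nf
    refine ⟨R1, hR1pos, fun r hr => hPd r hr, ℓ + k, fun n => ?_⟩
    have h1 := hmain n
    have h2 : (maxMod f)^[n] R1 ≤ b n * (maxMod f)^[n] R1 :=
      le_mul_of_one_le_left (le_trans hR1pos.le (horb_ge n)) (hb_one n)
    have h3 := hz (n + k)
    have hidx : n + k + ℓ = n + (ℓ + k) := by omega
    rw [hidx] at h3
    calc (maxMod f)^[n] R1 ≤ b n * (maxMod f)^[n] R1 := h2
      _ ≤ t (n + k) := h1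
      _ ≤ ‖f^[n + (ℓ + k)] z‖ := h3
end

section
/- Let f be a transcendental entire function, let R0 > 0 be such that M(r, f) > r for all r ≥ R0, and let ε : [R0, ∞) → (0, 1) be a nonincreasing function such that ε(M^n(r, f)) ≥ ε(r)^{n+1} for all r ≥ R0 and all n ≥ 1. Then ε(r)·r → ∞ as r → ∞. -/
open Filter Metric in
lemma maxMod_ge_sq (f : ℂ → ℂ) (hf : EntireTranscendental f) :
    ∀ᶠ r in Filter.atTop, r ^ 2 ≤ maxMod f r := by
  by_contra hcon
  obtain ⟨hdiff, hpoly⟩ := hf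
  rw [Filter.not_eventually] at hcon
  have hfreq : ∀ R : ℝ, ∃ r ≥ R, maxMod f r < r ^ 2 := by
    intro R
    obtain ⟨r, hr, h⟩ := (Filter.frequently_atTop.mp hcon) R
    exact ⟨r, hr, not_le.mp h⟩
  set g1 := dslope f 0 with hg1def
  set g2 := dslope g1 0 with hg2def
  set g3 := dslope g2 0 with hg3def
  have hstep : ∀ g : ℂ → ℂ, Differentiable ℂ g → Differentiable ℂ (dslope g 0) := by
    intro g hg
    rw [← differentiableOn_univ] at hg ⊢
    exact (Complex.differentiableOn_dslope Filter.univ_mem).mpr hg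
  have hdiff1 : Differentiable ℂ g1 := hstep f hdiff
  have hdiff2 : Differentiable ℂ g2 := hstep g1 hdiff1
  have hdiff3 : Differentiable ℂ g3 := hstep g2 hdiff2
  set A := ‖f 0‖ with hA
  set B := ‖g1 0‖ with hB
  set D := ‖g2 0‖ with hD
  set K := 1 + A + B + D with hK
  have hA0 : 0 ≤ A := norm_nonneg _
  have hB0 : 0 ≤ B := norm_nonneg _
  have hD0 : 0 ≤ D := norm_nonneg _
  have hK0 : 0 < K := by positivity
  have hsph : ∀ r : ℝ, 1 ≤ r → maxMod f r < r ^ 2 →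
      ∀ z : ℂ, ‖z‖ = r → ‖g3 z‖ ≤ K / r := by
    intro r hr hlt z hz
    have hrpos : 0 < r := by linarith
    have hfz : ‖f z‖ ≤ r ^ 2 := by
      have hb : BddAbove ((fun z => ‖f z‖) '' Metric.sphere (0 : ℂ) r) :=
        (isCompact_sphere 0 r).bddAbove_image
          ((continuous_norm.comp hdiff.continuous)).continuousOn
      have hmem : z ∈ Metric.sphere (0 : ℂ) r := by
        simpa [Metric.mem_sphere, dist_zero_right] using hz
      have hle : ‖f z‖ ≤ maxMod f r := le_csSup hb ⟨z, hmem, rfl⟩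
      calc ‖f z‖ = ‖f z‖ := rfl
        _ ≤ maxMod f r := hle
        _ ≤ r ^ 2 := hlt.le
    have key : ∀ (g : ℂ → ℂ) (C : ℝ), ‖g z‖ ≤ C → ‖dslope g 0 z‖ ≤ (C + ‖g 0‖) / r := by
      intro g C hC
      have h1 : (z - 0) • dslope g 0 z = g z - g 0 := sub_smul_dslope g 0 z
      have h2 : r * ‖dslope g 0 z‖ = ‖g z - g 0‖ := by
        rw [← h1, norm_smul]; simp [hz]
      rw [le_div_iff₀ hrpos, mul_comm, h2]
      exact (norm_sub_le _ _).trans (by linarith)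
    have h1 : ‖g1 z‖ ≤ r + A := by
      have h := key f (r ^ 2) hfz
      rw [← hg1def, ← hA] at h
      refine h.trans ?_
      rw [div_le_iff₀ hrpos]
      nlinarith
    have h2 : ‖g2 z‖ ≤ 1 + A + B := by
      have h := key g1 (r + A) h1
      rw [← hg2def, ← hB] at h
      refine h.trans ?_
      rw [div_le_iff₀ hrpos]
      nlinarith
    have h3 := key g2 (1 + A + B) h2
    rw [← hg3def, ← hD] at h3
    rw [hK]
    exact h3
  have hg3 : ∀ z : ℂ, g3 z = 0 := by
    intro z
    have hδ : ∀ δ : ℝ, 0 < δ → ‖g3 z‖ ≤ δ := by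
      intro δ hδ
      obtain ⟨r, hrge, hrlt⟩ := hfreq (max (max 1 ‖z‖) (K / δ))
      have hr1 : 1 ≤ r := le_trans (le_max_of_le_left (le_max_left _ _)) hrge
      have hrz : ‖z‖ ≤ r := le_trans (le_max_of_le_left (le_max_right _ _)) hrge
      have hrK : K / δ ≤ r := le_trans (le_max_right _ _) hrge
      have hrpos : 0 < r := by linarith
      have hfr : ∀ w ∈ frontier (Metric.ball (0 : ℂ) r), ‖g3 w‖ ≤ K / r := by
        rw [frontier_ball 0 (ne_of_gt hrpos)]
        intro w hw
        exact hsph r hr1 hrlt w (by simpa [dist_zero_right] using hw)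
      have hz' : z ∈ closure (Metric.ball (0 : ℂ) r) := by
        rw [closure_ball 0 (ne_of_gt hrpos)]
        simpa [dist_zero_right] using hrz
      have hb := Complex.norm_le_of_forall_mem_frontier_norm_le
        Metric.isBounded_ball hdiff3.diffContOnCl hfr hz'
      have : K / r ≤ δ := by
        rw [div_le_iff₀ hrpos]
        rw [div_le_iff₀ hδ] at hrK
        nlinarith
      linarith
    have : ‖g3 z‖ ≤ 0 := le_of_forall_pos_le_add (fun δ h => (hδ δ h).trans (by linarith))
    simpa using le_antisymm this (norm_nonneg _)
  have hg2c : ∀ z : ℂ, g2 z = g2 0 := by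
    intro z
    have h := sub_smul_dslope g2 0 z
    rw [← hg3def, hg3 z] at h
    simp at h
    linear_combination -h
  have hg1c : ∀ z : ℂ, g1 z = g1 0 + z * g2 0 := by
    intro z
    have h := sub_smul_dslope g1 0 z
    rw [← hg2def, hg2c z] at h
    simp [smul_eq_mul] at h
    linear_combination -h
  have hfc : ∀ z : ℂ, f z = f 0 + z * g1 0 + z ^ 2 * g2 0 := by
    intro z
    have h := sub_smul_dslope f 0 z
    rw [← hg1def, hg1c z] at h
    simp [smul_eq_mul] at h
    linear_combination -h
  exact hpoly ⟨Polynomial.C (f 0) + Polynomial.C (g1 0) * Polynomial.X +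
      Polynomial.C (g2 0) * Polynomial.X ^ 2, fun z => by simp [hfc z]; ring⟩

theorem simply_connected_fast_escaping_stmt1
    (f : ℂ → ℂ) (hf : EntireTranscendental f)
    (R0 : ℝ) (hR0 : 0 < R0) (hM : ∀ r ≥ R0, r < maxMod f r)
    (ε : ℝ → ℝ)
    (hε01 : ∀ r ≥ R0, ε r ∈ Set.Ioo (0 : ℝ) 1)
    (hεmono : ∀ r s, R0 ≤ r → r ≤ s → ε s ≤ ε r)
    (hεM : ∀ r ≥ R0, ∀ n : ℕ, 1 ≤ n → ε r ^ (n + 1) ≤ ε ((maxMod f)^[n] r)) :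
    Filter.Tendsto (fun r => ε r * r) Filter.atTop Filter.atTop := by
  obtain ⟨R2, hR2⟩ := Filter.eventually_atTop.mp (maxMod_ge_sq f hf)
  set r0 : ℝ := max (max R0 2) R2 with hr0def
  have hr0R0 : R0 ≤ r0 := le_trans (le_max_left _ _) (le_max_left _ _)
  have hr02 : (2 : ℝ) ≤ r0 := le_trans (le_max_right _ _) (le_max_left _ _)
  have hr0R2 : R2 ≤ r0 := le_max_right _ _
  set s : ℕ → ℝ := fun n => (maxMod f)^[n] r0 with hsdef
  have hs : ∀ n : ℕ, r0 ≤ s n ∧ r0 ^ (2 ^ n) ≤ s n := by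
    intro n
    induction n with
    | zero => simp [hsdef]
    | succ n ih =>
      obtain ⟨ih1, ih2⟩ := ih
      have hsucc : s (n + 1) = maxMod f (s n) := by
        simp [hsdef, Function.iterate_succ_apply']
      have h1 : s n ^ 2 ≤ maxMod f (s n) := hR2 (s n) (le_trans hr0R2 ih1)
      have h2 : s n < maxMod f (s n) := hM (s n) (le_trans hr0R0 ih1)
      constructor
      · rw [hsucc]; linarith
      · rw [hsucc, pow_succ, pow_mul]
        calc (r0 ^ 2 ^ n) ^ 2 ≤ s n ^ 2 :=
          pow_le_pow_left₀ (by positivity) ih2 2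
        _ ≤ maxMod f (s n) := h1
  have hsmono : Monotone s := by
    apply monotone_nat_of_le_succ
    intro n
    have : s (n + 1) = maxMod f (s n) := by
      simp [hsdef, Function.iterate_succ_apply']
    rw [this]
    exact (hM (s n) (le_trans hr0R0 (hs n).1)).le
  set c : ℝ := ε r0 with hcdef
  have hc : 0 < c ∧ c < 1 := ⟨(hε01 r0 hr0R0).1, (hε01 r0 hr0R0).2⟩
  -- the auxiliary sequence u j = c^(j+2) * 2^(2^j) tends to infinity
  have hu : Filter.Tendsto (fun j : ℕ => c ^ (j + 2) * (2 : ℝ) ^ (2 ^ j))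
      Filter.atTop Filter.atTop := by
    obtain ⟨N, hN⟩ := pow_unbounded_of_one_lt (2 / c) (one_lt_two (α := ℝ))
    have key : ∀ m : ℕ, N ≤ m → 2 ≤ c * 2 ^ (2 ^ m) := by
      intro m hm
      have h1 : (2 : ℝ) ^ N ≤ 2 ^ (2 ^ m) := by
        apply pow_le_pow_right₀ one_le_two
        calc N ≤ m := hm
        _ ≤ 2 ^ m := Nat.le_of_lt (Nat.lt_two_pow_self (n := m))
      have h2 : 2 / c ≤ 2 ^ (2 ^ m) := le_trans hN.le h1
      rw [div_le_iff₀ hc.1] at h2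
      linarith [mul_comm c ((2:ℝ) ^ (2 ^ m))]
    have hv : Filter.Tendsto (fun j : ℕ => c ^ ((j + N) + 2) * (2 : ℝ) ^ (2 ^ (j + N)))
        Filter.atTop Filter.atTop := by
      apply tendsto_atTop_of_geom_le (c := 2)
      · show (0:ℝ) < c ^ ((0 + N) + 2) * (2 : ℝ) ^ (2 ^ (0 + N))
        exact mul_pos (pow_pos hc.1 _) (pow_pos two_pos _)
      · norm_num
      · intro n
        show 2 * (c ^ ((n + N) + 2) * (2 : ℝ) ^ (2 ^ (n + N)))
          ≤ c ^ ((n + 1 + N) + 2) * (2 : ℝ) ^ (2 ^ (n + 1 + N))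
        have harr : n + 1 + N = n + N + 1 := by omega
        rw [harr]
        have hexp : (2 : ℝ) ^ (2 ^ (n + N + 1)) = ((2 : ℝ) ^ (2 ^ (n + N))) ^ 2 := by
          rw [← pow_mul, ← pow_succ]
        rw [hexp]
        have h2 : 2 ≤ c * 2 ^ (2 ^ (n + N)) := key (n + N) (Nat.le_add_left _ _)
        have hpos : (0:ℝ) < c ^ ((n + N) + 2) * 2 ^ (2 ^ (n + N)) :=
          mul_pos (pow_pos hc.1 _) (pow_pos two_pos _)
        have hc' : c ^ (n + N + 1 + 2) = c * c ^ (n + N + 2) := by ring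
        rw [hc']
        nlinarith [mul_le_mul_of_nonneg_right h2 hpos.le]
    exact (Filter.tendsto_add_atTop_iff_nat N).mp hv
  rw [Filter.tendsto_atTop]
  intro C
  obtain ⟨N, hN⟩ := Filter.eventually_atTop.mp (hu.eventually_ge_atTop C)
  filter_upwards [Filter.eventually_ge_atTop (s N)] with x hx
  have hex : ∃ m : ℕ, x < s m := by
    obtain ⟨m, hm⟩ := pow_unbounded_of_one_lt x (one_lt_two (α := ℝ))
    refine ⟨m, lt_of_lt_of_le hm ?_⟩
    calc (2 : ℝ) ^ m ≤ 2 ^ (2 ^ m) :=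
          pow_le_pow_right₀ one_le_two (Nat.le_of_lt (Nat.lt_two_pow_self (n := m)))
    _ ≤ r0 ^ (2 ^ m) := pow_le_pow_left₀ (by norm_num) hr02 _
    _ ≤ s m := (hs m).2
  have hxm : x < s (Nat.find hex) := Nat.find_spec hex
  have hNm : N < Nat.find hex := by
    by_contra h
    push_neg at h
    exact absurd (le_trans (hsmono h) hx) (not_le.mpr hxm)
  set j := Nat.find hex - 1 with hjdef
  have hj1 : Nat.find hex = j + 1 := by omega
  have hNj : N ≤ j := by omega
  have hsjx : s j ≤ x := by
    by_contra h
    have := Nat.find_min' hex (not_le.mp h)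
    omega
  rw [hj1] at hxm
  have hx2 : (2 : ℝ) ^ (2 ^ j) ≤ x := by
    calc (2 : ℝ) ^ (2 ^ j) ≤ r0 ^ (2 ^ j) := pow_le_pow_left₀ (by norm_num) hr02 _
    _ ≤ s j := (hs j).2
    _ ≤ x := hsjx
  have hεx : c ^ (j + 2) ≤ ε x := by
    have h1 : ε r0 ^ (j + 1 + 1) ≤ ε ((maxMod f)^[j + 1] r0) :=
      hεM r0 hr0R0 (j + 1) (Nat.le_add_left _ _)
    have h2 : ε (s (j + 1)) ≤ ε x := by
      apply hεmono x (s (j + 1)) ?_ hxm.le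
      calc R0 ≤ r0 := hr0R0
      _ ≤ s N := (hs N).1
      _ ≤ x := hx
    calc c ^ (j + 2) = ε r0 ^ (j + 1 + 1) := by rw [hcdef]
    _ ≤ ε (s (j + 1)) := h1
    _ ≤ ε x := h2
  calc C ≤ c ^ (j + 2) * 2 ^ (2 ^ j) := hN j hNj
  _ ≤ ε x * x := by
      apply mul_le_mul hεx hx2 (by positivity) ?_
      exact le_trans (pow_nonneg hc.1.le _) hεx
end

section
/- With the sequences (α_n) and (β_n) defined as in the context (for any fixed sufficiently large even integer N0), one has α_n / ((3/2)n²) → 1 and β_n / ((2/3)n²) → 1 as n → ∞. -/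
/-- `μ_n = n^{3/n}`. -/
noncomputable def muSeq (n : ℕ) : ℝ := (n : ℝ) ^ ((3 : ℝ) / n)

/-- `σ_n = Σ_{l=1}^{n-2} μ_n^l`. -/
noncomputable def sigmaSeq (n : ℕ) : ℝ := ∑ l ∈ Finset.Icc 1 (n - 2), muSeq n ^ l

open Filter Real

lemma sigma_key {n : ℕ} (hn : 3 ≤ n) :
    sigmaSeq n / (n : ℝ) ^ 4 ≤ (3 * Real.log n)⁻¹ := by
  have hnR : (3 : ℝ) ≤ (n : ℝ) := by exact_mod_cast hn
  have hn0 : (0 : ℝ) < n := by linarith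
  have hlog : 0 < Real.log n := Real.log_pos (by linarith)
  set μ := muSeq n with hμdef
  have hμ1 : 1 < μ := by
    rw [hμdef, muSeq, Real.one_lt_rpow_iff_of_pos hn0]
    exact Or.inl ⟨by linarith, by positivity⟩
  have hμsub : μ - 1 ≠ 0 := by linarith
  -- σ = (μ^(n-1) - μ)/(μ-1)
  have hform : sigmaSeq n = (μ ^ (n - 1) - μ ^ 1) / (μ - 1) := by
    have hset : Finset.Icc 1 (n - 2) = Finset.Ico 1 (n - 1) := by
      rw [← Finset.Ico_add_one_right_eq_Icc]; congr 1; omega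
    rw [sigmaSeq, hset, geom_sum_Ico (ne_of_gt hμ1) (by omega : 1 ≤ n - 1)]
  -- μ ^ n = n ^ 3
  have hμn : μ ^ n = (n : ℝ) ^ 3 := by
    rw [hμdef, muSeq, ← Real.rpow_natCast (_ ^ _) n, ← Real.rpow_mul (le_of_lt hn0)]
    rw [div_mul_cancel₀ _ (by positivity : (n : ℝ) ≠ 0)]
    exact_mod_cast Real.rpow_natCast (n:ℝ) 3
  -- μ - 1 ≥ log n * (3/n)
  have hexp : Real.log n * (3 / n) ≤ μ - 1 := by
    have h1 : μ = Real.exp (Real.log n * (3 / n)) := by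
      rw [hμdef, muSeq, Real.rpow_def_of_pos hn0]
    have := Real.add_one_le_exp (Real.log n * (3 / n))
    rw [← h1] at this
    linarith
  have hμpow : μ ^ (n - 1) ≤ μ ^ n := by
    apply pow_le_pow_right₀ (le_of_lt hμ1); omega
  have hμpos : (0 : ℝ) < μ := by linarith
  -- key: σ * (3 log n) ≤ n^4
  have hkey : sigmaSeq n * (3 * Real.log n) ≤ (n : ℝ) ^ 4 := by
    have hσ : sigmaSeq n * (μ - 1) = μ ^ (n - 1) - μ ^ 1 := by
      rw [hform, div_mul_cancel₀ _ hμsub]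
    have hσpos : 0 ≤ sigmaSeq n := by
      rw [sigmaSeq]; positivity
    have h3L : 3 * Real.log n ≤ (μ - 1) * n := by
      have := mul_le_mul_of_nonneg_right hexp (le_of_lt hn0)
      calc 3 * Real.log n = Real.log n * (3 / n) * n := by field_simp
        _ ≤ (μ - 1) * n := by exact mul_le_mul_of_nonneg_right hexp (le_of_lt hn0)
    calc sigmaSeq n * (3 * Real.log n) ≤ sigmaSeq n * ((μ - 1) * n) :=
          mul_le_mul_of_nonneg_left h3L hσpos
      _ = (μ ^ (n - 1) - μ ^ 1) * n := by rw [← hσ]; ring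
      _ ≤ μ ^ n * n := by
          have : μ ^ 1 ≥ 0 := by positivity
          nlinarith
      _ = (n : ℝ) ^ 4 := by rw [hμn]; ring
  rw [div_le_iff₀ (by positivity), inv_mul_eq_div, le_div_iff₀ (by positivity)]
  exact hkey

lemma sigma_tendsto : Filter.Tendsto (fun n : ℕ => sigmaSeq n / (n : ℝ) ^ 4)
    Filter.atTop (nhds 0) := by
  apply tendsto_of_tendsto_of_tendsto_of_le_of_le' tendsto_const_nhds
    (g := fun _ => (0:ℝ)) (h := fun n : ℕ => (3 * Real.log n)⁻¹)
  · have : Tendsto (fun n : ℕ => 3 * Real.log n) atTop atTop :=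
      (Real.tendsto_log_atTop.comp tendsto_natCast_atTop_atTop).const_mul_atTop (by norm_num)
    exact this.inv_tendsto_atTop
  · filter_upwards with n
    have hσ : 0 ≤ sigmaSeq n := by
      apply Finset.sum_nonneg
      intro l _
      have : (0:ℝ) ≤ muSeq n := Real.rpow_nonneg (Nat.cast_nonneg n) _
      positivity
    positivity
  · filter_upwards [eventually_ge_atTop 3] with n hn
    exact sigma_key hn

lemma aux_lim (c : ℝ) : Filter.Tendsto (fun n : ℕ => (3*(n:ℝ)^2 + n + c)/(3*(n:ℝ)^2))
    Filter.atTop (nhds 1) := by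
  have h1 : Tendsto (fun n : ℕ => 1 / (n:ℝ)) atTop (nhds 0) := tendsto_one_div_atTop_nhds_zero_nat
  have h2 : Tendsto (fun n : ℕ => 1 + (1/3)*(1/(n:ℝ)) + (c/3)*(1/(n:ℝ))^2) atTop
      (nhds (1 + (1/3)*0 + (c/3)*0^2)) :=
    ((tendsto_const_nhds.add (h1.const_mul _)).add ((h1.pow 2).const_mul _))
  norm_num at h2
  apply h2.congr'
  filter_upwards [eventually_ge_atTop 1] with n hn
  have hn0 : (n:ℝ) ≠ 0 := by positivity
  field_simp

theorem simply_connected_fast_escaping_stmt5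
    (N0 : ℕ) (hN0even : Even N0) (hN0 : 4 ≤ N0)
    (α : ℕ → ℕ) (β : ℕ → ℝ)
    (hα1 : ∀ n < N0, α n = 0)
    (hα2 : 2 * α N0 = N0 ^ 3 + 2 * N0 ^ 2 + 6 * N0 + 2)
    (hα3 : ∀ n, N0 < n → Even n → 2 * α n = 3 * n ^ 2 + n + 6)
    (hα4 : ∀ n, N0 < n → Odd n → 2 * α n = 3 * n ^ 2 + n + 4)
    (hβ1 : ∀ n < N0, β n = 0)
    (hβ2 : ∀ n, N0 ≤ n → Even n → β n = ((n : ℝ) ^ 4 - sigmaSeq n) / (α n : ℝ))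
    (hβ3 : ∀ n, N0 ≤ n → Odd n →
      β n = ((n : ℝ) ^ 3 * (2 * (n : ℝ) - 1) / 2 - sigmaSeq n) / (α n : ℝ)) :
    Filter.Tendsto (fun n : ℕ => (α n : ℝ) / ((3 / 2) * (n : ℝ) ^ 2))
      Filter.atTop (nhds 1) ∧
    Filter.Tendsto (fun n : ℕ => β n / ((2 / 3) * (n : ℝ) ^ 2))
      Filter.atTop (nhds 1) := by
  -- bounds on 2 * α n for n > N0
  have hαbound : ∀ n, N0 < n →
      3 * n ^ 2 + n + 4 ≤ 2 * α n ∧ 2 * α n ≤ 3 * n ^ 2 + n + 6 := by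
    intro n hn
    rcases Nat.even_or_odd n with he | ho
    · rw [hα3 n hn he]; omega
    · rw [hα4 n hn ho]; omega
  -- Part 1
  have part1 : Tendsto (fun n : ℕ => (α n : ℝ) / ((3 / 2) * (n : ℝ) ^ 2))
      atTop (nhds 1) := by
    apply tendsto_of_tendsto_of_tendsto_of_le_of_le' (aux_lim 4) (aux_lim 6)
    · filter_upwards [eventually_gt_atTop N0] with n hn
      obtain ⟨h1, _⟩ := hαbound n hn
      have hn0 : (0:ℝ) < (n:ℝ) := by
        have : 0 < n := by omega
        exact_mod_cast this
      have hcast : (3*(n:ℝ)^2 + n + 4) ≤ ((2 * α n : ℕ) : ℝ) := by exact_mod_cast h1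
      have heq : (α n : ℝ) / ((3 / 2) * (n : ℝ) ^ 2) = ((2 * α n : ℕ) : ℝ) / (3*(n:ℝ)^2) := by
        push_cast; field_simp
      rw [heq]
      gcongr
    · filter_upwards [eventually_gt_atTop N0] with n hn
      obtain ⟨_, h2⟩ := hαbound n hn
      have hn0 : (0:ℝ) < (n:ℝ) := by
        have : 0 < n := by omega
        exact_mod_cast this
      have hcast : ((2 * α n : ℕ) : ℝ) ≤ (3*(n:ℝ)^2 + n + 6) := by exact_mod_cast h2
      have heq : (α n : ℝ) / ((3 / 2) * (n : ℝ) ^ 2) = ((2 * α n : ℕ) : ℝ) / (3*(n:ℝ)^2) := by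
        push_cast; field_simp
      rw [heq]
      gcongr
  refine ⟨part1, ?_⟩
  -- Part 2
  -- f n = β n * α n / n^4 tends to 1
  have hαpos : ∀ n, N0 < n → 0 < α n := by
    intro n hn
    obtain ⟨h1, _⟩ := hαbound n hn
    omega
  have hβα : ∀ n, N0 < n →
      β n * (α n : ℝ) = (if Even n then (n : ℝ) ^ 4
        else (n : ℝ) ^ 3 * (2 * (n : ℝ) - 1) / 2) - sigmaSeq n := by
    intro n hn
    have hα0 : (α n : ℝ) ≠ 0 := by
      have := hαpos n hn
      positivity
    rcases Nat.even_or_odd n with he | ho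
    · rw [hβ2 n (le_of_lt hn) he, if_pos he, div_mul_cancel₀ _ hα0]
    · rw [hβ3 n (le_of_lt hn) ho, if_neg (Nat.not_even_iff_odd.mpr ho), div_mul_cancel₀ _ hα0]
  have hf : Tendsto (fun n : ℕ => β n * (α n : ℝ) / (n : ℝ) ^ 4) atTop (nhds 1) := by
    have hlo : Tendsto (fun n : ℕ => 1 - (1/2) * (1/(n:ℝ)) - sigmaSeq n / (n:ℝ)^4) atTop
        (nhds 1) := by
      have h : Tendsto (fun n : ℕ => 1 - (1/2) * (1/(n:ℝ)) - sigmaSeq n / (n:ℝ)^4) atTop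
          (nhds (1 - (1/2)*0 - 0)) :=
        (tendsto_const_nhds.sub (tendsto_one_div_atTop_nhds_zero_nat.const_mul _)).sub
          sigma_tendsto
      convert h using 2
      norm_num
    have hhi : Tendsto (fun n : ℕ => 1 - sigmaSeq n / (n:ℝ)^4) atTop (nhds 1) := by
      have h : Tendsto (fun n : ℕ => 1 - sigmaSeq n / (n:ℝ)^4) atTop (nhds (1 - 0)) :=
        tendsto_const_nhds.sub sigma_tendsto
      convert h using 2
      norm_num
    apply tendsto_of_tendsto_of_tendsto_of_le_of_le' hlo hhi
    · filter_upwards [eventually_gt_atTop N0] with n hn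
      have hn0 : (0:ℝ) < (n:ℝ) := by
        exact_mod_cast (by omega : 0 < n)
      rw [hβα n hn]
      rcases Nat.even_or_odd n with he | ho
      · rw [if_pos he]
        have h12 : 0 ≤ (1/2) * (1/(n:ℝ)) := by positivity
        have : ((n:ℝ)^4 - sigmaSeq n) / (n:ℝ)^4 = 1 - sigmaSeq n / (n:ℝ)^4 := by
          field_simp
        rw [this]; linarith
      · rw [if_neg (Nat.not_even_iff_odd.mpr ho)]
        have : ((n:ℝ)^3 * (2*(n:ℝ)-1)/2 - sigmaSeq n) / (n:ℝ)^4
            = 1 - (1/2) * (1/(n:ℝ)) - sigmaSeq n / (n:ℝ)^4 := by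
          field_simp
        rw [this]
    · filter_upwards [eventually_gt_atTop N0] with n hn
      have hn0 : (0:ℝ) < (n:ℝ) := by
        exact_mod_cast (by omega : 0 < n)
      rw [hβα n hn]
      rcases Nat.even_or_odd n with he | ho
      · rw [if_pos he]
        have : ((n:ℝ)^4 - sigmaSeq n) / (n:ℝ)^4 = 1 - sigmaSeq n / (n:ℝ)^4 := by
          field_simp
        rw [this]
      · rw [if_neg (Nat.not_even_iff_odd.mpr ho)]
        have h12 : 0 ≤ (1/2) * (1/(n:ℝ)) := by positivity
        have : ((n:ℝ)^3 * (2*(n:ℝ)-1)/2 - sigmaSeq n) / (n:ℝ)^4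
            = 1 - (1/2) * (1/(n:ℝ)) - sigmaSeq n / (n:ℝ)^4 := by
          field_simp
        rw [this]; linarith
  -- combine: β n / ((2/3) n^2) = f n / g n
  have hdiv : Tendsto (fun n : ℕ => (β n * (α n : ℝ) / (n : ℝ) ^ 4) /
      ((α n : ℝ) / ((3 / 2) * (n : ℝ) ^ 2))) atTop (nhds 1) := by
    have h := hf.div part1 one_ne_zero
    convert h using 2
    norm_num
    norm_num
  apply hdiv.congr'
  filter_upwards [eventually_gt_atTop N0] with n hn
  have hn0 : (0:ℝ) < (n:ℝ) := by
    exact_mod_cast (by omega : 0 < n)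
  have hα0 : (α n : ℝ) ≠ 0 := by
    have := hαpos n hn
    positivity
  field_simp
end

section
/- With the sequences (α_n) and (β_n) defined as in the context (for any fixed even integer N0 ≥ 4), there exists N ∈ ℕ such that for all n ≥ N one has μ_n² < β_n < μ_n^{n−3}, where μ_n = n^{3/n}. -/
lemma mu_pow_eq (n k : ℕ) : muSeq n ^ k = (n:ℝ) ^ ((3 * k : ℝ)/n) := by
  rw [muSeq, ← Real.rpow_natCast ((n:ℝ) ^ ((3:ℝ)/n)) k, ← Real.rpow_mul (Nat.cast_nonneg n)]
  ring_nf

lemma one_lt_mu (n : ℕ) (hn : 2 ≤ n) : 1 < muSeq n := by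
  have h1 : (1:ℝ) < n := by exact_mod_cast Nat.lt_of_lt_of_le one_lt_two hn
  rw [muSeq, Real.one_lt_rpow_iff_of_pos (by linarith)]
  left
  constructor
  · exact h1
  · positivity

lemma sigma_nonneg (n : ℕ) (hn : 2 ≤ n) : 0 ≤ sigmaSeq n := by
  apply Finset.sum_nonneg
  intro l _
  have := one_lt_mu n hn
  positivity

lemma sigma_le (n : ℕ) (hn : 10 ≤ n) : sigmaSeq n ≤ (n:ℝ)^4 / 2 := by
  have hn0 : (0:ℝ) < n := by exact_mod_cast Nat.lt_of_lt_of_le (by norm_num) hn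
  have hn2 : (2:ℝ) ≤ n := by exact_mod_cast Nat.le_trans (by norm_num) hn
  have hmu := one_lt_mu n (by omega)
  have hne : muSeq n ≠ 1 := ne_of_gt hmu
  have hIcc : Finset.Icc 1 (n-2) = Finset.Ico 1 (n-1) := by
    have h : n - 1 = n - 2 + 1 := by omega
    rw [h, Finset.Ico_add_one_right_eq_Icc]
  have hsum : sigmaSeq n = (muSeq n ^ (n-1) - muSeq n ^ 1) / (muSeq n - 1) := by
    rw [sigmaSeq, hIcc, geom_sum_Ico hne (by omega)]
  -- μ^{n-1} ≤ n^3
  have hmu3 : muSeq n ^ (n-1) ≤ (n:ℝ)^3 := by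
    rw [mu_pow_eq]
    have h3 : (n:ℝ) ^ ((3*((n-1:ℕ):ℝ))/n) ≤ (n:ℝ) ^ (((3:ℕ):ℝ)) := by
      apply Real.rpow_le_rpow_of_exponent_le (by linarith)
      rw [div_le_iff₀ hn0]
      push_cast [Nat.cast_sub (by omega : 1 ≤ n)]
      nlinarith
    rw [Real.rpow_natCast] at h3
    exact h3
  -- μ - 1 ≥ 2/n
  have hlog : Real.log (muSeq n) = 3 / n * Real.log n := Real.log_rpow hn0 _
  have hln : (2:ℝ)/3 ≤ Real.log n := by
    have h2 : Real.log 2 ≤ Real.log n := Real.log_le_log (by norm_num) hn2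
    have := Real.log_two_gt_d9
    linarith
  have hmupos : (0:ℝ) < muSeq n := by linarith
  have hgap : (2:ℝ)/n ≤ muSeq n - 1 := by
    have he := Real.add_one_le_exp (Real.log (muSeq n))
    rw [Real.exp_log hmupos] at he
    have : (2:ℝ)/n ≤ 3 / n * Real.log n := by
      rw [div_mul_eq_mul_div]
      gcongr
      linarith
    linarith [hlog ▸ he]
  have hgappos : (0:ℝ) < 2/n := by positivity
  calc sigmaSeq n = (muSeq n ^ (n-1) - muSeq n ^ 1) / (muSeq n - 1) := hsum
    _ ≤ (n:ℝ)^3 / ((2:ℝ)/n) := by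
        apply div_le_div₀ (by positivity)
        · have : (1:ℝ) ≤ muSeq n ^ 1 := by simpa using hmu.le
          linarith
        · exact hgappos
        · exact hgap
    _ = (n:ℝ)^4 / 2 := by field_simp

lemma main_bounds (n : ℕ) (hn : 10 ≤ n) (num A : ℝ)
    (h1 : (n:ℝ)^4/4 ≤ num) (h2 : num ≤ (n:ℝ)^4)
    (hA1 : 3*(n:ℝ)^2/2 ≤ A) (hA2 : A ≤ 2*(n:ℝ)^2) :
    muSeq n ^ 2 < num / A ∧ num / A < muSeq n ^ (n-3) := by
  have hn0 : (0:ℝ) < n := by exact_mod_cast Nat.lt_of_lt_of_le (by norm_num) hn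
  have hn10 : (10:ℝ) ≤ n := by exact_mod_cast hn
  have hA0 : (0:ℝ) < A := by nlinarith
  constructor
  · -- μ² ≤ n < num/A
    have hmu2 : muSeq n ^ 2 ≤ (n:ℝ) := by
      rw [mu_pow_eq]
      have h2' : (n:ℝ) ^ ((3*((2:ℕ):ℝ))/n) ≤ (n:ℝ) ^ (1:ℝ) := by
        apply Real.rpow_le_rpow_of_exponent_le (by linarith)
        rw [div_le_iff₀ hn0]
        push_cast; nlinarith
      rw [Real.rpow_one] at h2'
      exact h2'
    have : (n:ℝ) < num / A := by
      rw [lt_div_iff₀ hA0]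
      nlinarith
    linarith
  · -- num/A < n² ≤ μ^{n-3}
    have hup : num / A < (n:ℝ)^2 := by
      rw [div_lt_iff₀ hA0]
      nlinarith
    have hmu3 : (n:ℝ)^2 ≤ muSeq n ^ (n-3) := by
      rw [mu_pow_eq]
      have h3' : (n:ℝ) ^ (((2:ℕ):ℝ)) ≤ (n:ℝ) ^ ((3*((n-3:ℕ):ℝ))/n) := by
        apply Real.rpow_le_rpow_of_exponent_le (by linarith)
        rw [le_div_iff₀ hn0]
        push_cast [Nat.cast_sub (by omega : 3 ≤ n)]
        nlinarith
      rw [Real.rpow_natCast] at h3'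
      exact h3'
    linarith

theorem simply_connected_fast_escaping_stmt8
    (N0 : ℕ) (hN0even : Even N0) (hN0 : 4 ≤ N0)
    (α : ℕ → ℕ) (β : ℕ → ℝ)
    (hα1 : ∀ n < N0, α n = 0)
    (hα2 : 2 * α N0 = N0 ^ 3 + 2 * N0 ^ 2 + 6 * N0 + 2)
    (hα3 : ∀ n, N0 < n → Even n → 2 * α n = 3 * n ^ 2 + n + 6)
    (hα4 : ∀ n, N0 < n → Odd n → 2 * α n = 3 * n ^ 2 + n + 4)
    (hβ1 : ∀ n < N0, β n = 0)
    (hβ2 : ∀ n, N0 ≤ n → Even n → β n = ((n : ℝ) ^ 4 - sigmaSeq n) / (α n : ℝ))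
    (hβ3 : ∀ n, N0 ≤ n → Odd n →
      β n = ((n : ℝ) ^ 3 * (2 * (n : ℝ) - 1) / 2 - sigmaSeq n) / (α n : ℝ)) :
    ∃ N : ℕ, ∀ n, N ≤ n → muSeq n ^ 2 < β n ∧ β n < muSeq n ^ (n - 3) := by
  refine ⟨N0 + 10, fun n hn => ?_⟩
  have hn10 : 10 ≤ n := by omega
  have hnN0 : N0 < n := by omega
  have hnR : (10:ℝ) ≤ (n:ℝ) := by exact_mod_cast hn10
  have hσ0 : 0 ≤ sigmaSeq n := sigma_nonneg n (by omega)
  have hσ : sigmaSeq n ≤ (n:ℝ)^4 / 2 := sigma_le n hn10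
  rcases Nat.even_or_odd n with he | ho
  · have hα := hα3 n hnN0 he
    have hαR : (2:ℝ) * (α n : ℝ) = 3*(n:ℝ)^2 + (n:ℝ) + 6 := by exact_mod_cast congrArg (Nat.cast : ℕ → ℝ) hα
    rw [hβ2 n (by omega) he]
    exact main_bounds n hn10 _ _ (by nlinarith) (by nlinarith) (by nlinarith) (by nlinarith)
  · have hα := hα4 n hnN0 ho
    have hαR : (2:ℝ) * (α n : ℝ) = 3*(n:ℝ)^2 + (n:ℝ) + 4 := by exact_mod_cast congrArg (Nat.cast : ℕ → ℝ) hα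
    rw [hβ3 n (by omega) ho]
    exact main_bounds n hn10 _ _ (by nlinarith) (by nlinarith) (by nlinarith) (by nlinarith)
end
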